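/- Let G be a digraph, x, y chip-distributions, and suppose there exist vectors f, g ∈ ℤ^V satisfying: (1) x + Lf = y, f ≥ 0, and f is reduced (f ≥ p fails for every nonzero period vector p of G); (2) 0 ≤ g ≤ f and g(v) < f(v) for some vertex v; (3) for every vertex v, either g(v) = f(v) or (x + Lg)(v) < d⁺(v). Then y is not reachable from x by a legal game, i.e., ¬(x ⤳ y). -/

import Mathlib

namespace ChipFiring

variable {V : Type*}

/-- Out-degree of a vertex: total multiplicity of edges leaving `v`. -/
def outdeg [Fintype V] (d : V → V → ℕ) (v : V) : ℕ := ∑ u, d v u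

/-- In-degree of a vertex: total multiplicity of edges entering `v`. -/
def indeg [Fintype V] (d : V → V → ℕ) (v : V) : ℕ := ∑ u, d u v

/-- A digraph (multiplicity function) has no loops. -/
def Loopless (d : V → V → ℕ) : Prop := ∀ v, d v v = 0

/-- Weak connectivity: each pair of vertices is joined by an undirected walk. -/
def WeaklyConnected (d : V → V → ℕ) : Prop :=
  ∀ u v : V, Relation.ReflTransGen (fun a b => d a b ≠ 0 ∨ d b a ≠ 0) u v

/-- Strong connectivity: each ordered pair of vertices is joined by a directed walk. -/
def StronglyConnected (d : V → V → ℕ) : Prop :=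
  ∀ u v : V, Relation.ReflTransGen (fun a b => d a b ≠ 0) u v

/-- Eulerian: out-degree equals in-degree at each vertex. -/
def Eulerian [Fintype V] (d : V → V → ℕ) : Prop := ∀ v, outdeg d v = indeg d v

/-- The Laplacian matrix: `L(u,u) = -d⁺(u)`, and `L(u,v) = d(v,u)` for `u ≠ v`. -/
def laplacian [Fintype V] [DecidableEq V] (d : V → V → ℕ) : Matrix V V ℤ :=
  fun u v => if u = v then -(outdeg d v : ℤ) else (d v u : ℤ)

/-- Firing vertex `v`: `v` sends one chip along each outgoing edge. -/
def fire [Fintype V] [DecidableEq V] (d : V → V → ℕ) (x : V → ℕ) (v : V) : V → ℕ :=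
  fun u => if u = v then x v - outdeg d v else x u + d v u

/-- `LegalSeq d x α` : the sequence of firings `α` is legal from initial distribution `x`. -/
def LegalSeq [Fintype V] [DecidableEq V] (d : V → V → ℕ) : (V → ℕ) → List V → Prop
  | _, [] => True
  | x, v :: rest => outdeg d v ≤ x v ∧ LegalSeq d (fire d x v) rest

/-- The chip-distribution obtained from `x` after performing the firings `α`. -/
def runGame [Fintype V] [DecidableEq V] (d : V → V → ℕ) : (V → ℕ) → List V → (V → ℕ)
  | x, [] => x
  | x, v :: rest => runGame d (fire d x v) rest

/-- The firing vector of a game: how many times each vertex is fired. -/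
def firingVector [DecidableEq V] (α : List V) : V → ℕ := fun v => α.count v

/-- `x ⤳ y` : some legal game transforms `x` into `y`. -/
def Reaches [Fintype V] [DecidableEq V] (d : V → V → ℕ) (x y : V → ℕ) : Prop :=
  ∃ α : List V, LegalSeq d x α ∧ runGame d x α = y

/-- A period vector: a nonnegative integer vector in the kernel of the Laplacian. -/
def PeriodVector [Fintype V] [DecidableEq V] (d : V → V → ℕ) (p : V → ℕ) : Prop :=
  (laplacian d).mulVec (fun v => (p v : ℤ)) = 0

/-- A vector `f ∈ ℕ^V` is reduced if `f ≥ p` fails for every nonzero period vector `p`. -/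
def Reduced [Fintype V] [DecidableEq V] (d : V → V → ℕ) (f : V → ℕ) : Prop :=
  ∀ p : V → ℕ, PeriodVector d p → p ≠ 0 → ¬ (∀ v, p v ≤ f v)

/-- A distribution is recurrent if a nonempty legal game transforms it back to itself. -/
def Recurrent [Fintype V] [DecidableEq V] (d : V → V → ℕ) (x : V → ℕ) : Prop :=
  ∃ α : List V, α ≠ [] ∧ LegalSeq d x α ∧ runGame d x α = x

/-- Linear equivalence: `x = y + Lz` for some integer vector `z`. -/
def LinEquiv [Fintype V] [DecidableEq V] (d : V → V → ℕ) (x y : V → ℕ) : Prop :=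
  ∃ z : V → ℤ, ∀ v, (x v : ℤ) = (y v : ℤ) + (laplacian d).mulVec z v

/-- `x` is non-terminating: there is an infinite sequence of legal firings from `x`. -/
def NonTerminating [Fintype V] [DecidableEq V] (d : V → V → ℕ) (x : V → ℕ) : Prop :=
  ∃ s : ℕ → V, ∀ n : ℕ, LegalSeq d x (List.ofFn (fun i : Fin n => s i))

end ChipFiring

namespace ChipFiring

section Aux

variable {V : Type*} [Fintype V] [DecidableEq V]

private lemma lap_mulVec (d : V → V → ℕ) (z : V → ℤ) (u : V) :
    (laplacian d).mulVec z u
      = ∑ v, (if u = v then -(outdeg d v : ℤ) else (d v u : ℤ)) * z v := rfl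

private lemma lap_colsum (d : V → V → ℕ) (hloop : Loopless d) (v : V) :
    ∑ u, laplacian d u v = 0 := by
  have key : ∀ u : V, laplacian d u v
      = (if u = v then (-(outdeg d v : ℤ) - (d v u : ℤ)) else 0) + (d v u : ℤ) := by
    intro u
    unfold laplacian
    split_ifs with h
    · ring
    · ring
  rw [Finset.sum_congr rfl fun u _ => key u, Finset.sum_add_distrib,
    Finset.sum_ite_eq' Finset.univ v, if_pos (Finset.mem_univ v), hloop v]
  have : ∑ u, (d v u : ℤ) = (outdeg d v : ℤ) := by
    unfold outdeg; push_cast; rfl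
  rw [this]; push_cast; ring

/-- Maximum principle: the positive part of a kernel vector is in the kernel. -/
private lemma maxpr (d : V → V → ℕ) (hloop : Loopless d) (z : V → ℤ)
    (hz : (laplacian d).mulVec z = 0) :
    (laplacian d).mulVec (fun v => max (z v) 0) = 0 := by
  set w : V → ℤ := fun v => max (z v) 0 with hw
  have hnn : ∀ u, 0 ≤ (laplacian d).mulVec w u := by
    intro u
    rw [lap_mulVec]
    rcases le_or_gt (z u) 0 with h | h
    · apply Finset.sum_nonneg
      intro v _
      by_cases hv : u = v
      · subst hv
        rw [if_pos rfl]
        have : w u = 0 := max_eq_right h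
        rw [this, mul_zero]
      · rw [if_neg hv]
        exact mul_nonneg (by positivity) (le_max_right _ _)
    · have h0 : (laplacian d).mulVec z u = 0 := by rw [hz]; rfl
      rw [lap_mulVec] at h0
      calc (0:ℤ) = ∑ v, (if u = v then -(outdeg d v : ℤ) else (d v u : ℤ)) * z v := h0.symm
        _ ≤ ∑ v, (if u = v then -(outdeg d v : ℤ) else (d v u : ℤ)) * w v := by
            apply Finset.sum_le_sum
            intro v _
            by_cases hv : u = v
            · subst hv
              rw [if_pos rfl]
              have : w u = z u := max_eq_left h.le
              rw [this]
            · rw [if_neg hv]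
              exact mul_le_mul_of_nonneg_left (le_max_left _ _) (by positivity)
  have hsum : ∑ u, (laplacian d).mulVec w u = 0 := by
    have : ∑ u, (laplacian d).mulVec w u
        = ∑ v, (∑ u, laplacian d u v) * w v := by
      simp only [lap_mulVec]
      rw [Finset.sum_comm]
      congr 1
      funext v
      rw [Finset.sum_mul]
      rfl
    rw [this]
    apply Finset.sum_eq_zero
    intro v _
    rw [lap_colsum d hloop v, zero_mul]
  funext u
  have := (Finset.sum_eq_zero_iff_of_nonneg (fun u _ => hnn u)).mp hsum u (Finset.mem_univ u)
  simpa using this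

private lemma fire_cast (d : V → V → ℕ) (x : V → ℕ) (v : V)
    (hfire : outdeg d v ≤ x v) (u : V) :
    ((fire d x v u : ℕ) : ℤ) = (x u : ℤ) + laplacian d u v := by
  unfold fire laplacian
  by_cases h : u = v
  · subst h
    rw [if_pos rfl, if_pos rfl, Nat.cast_sub hfire]
    ring
  · rw [if_neg h, if_neg h]
    push_cast
    ring

private lemma mulVec_single (d : V → V → ℕ) (v u : V) :
    (laplacian d).mulVec (fun w => if w = v then (1:ℤ) else 0) u = laplacian d u v := by
  rw [lap_mulVec]
  have : ∀ w : V, (if u = w then -(outdeg d w : ℤ) else (d w u : ℤ))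
      * (if w = v then (1:ℤ) else 0)
      = if w = v then (if u = w then -(outdeg d w : ℤ) else (d w u : ℤ)) else 0 := by
    intro w; split_ifs <;> ring
  rw [Finset.sum_congr rfl fun w _ => this w,
    Finset.sum_ite_eq' Finset.univ v, if_pos (Finset.mem_univ v)]
  rfl

private lemma runGame_cast (d : V → V → ℕ) (α : List V) :
    ∀ x : V → ℕ, LegalSeq d x α →
      ∀ u, (runGame d x α u : ℤ)
        = (x u : ℤ) + (laplacian d).mulVec (fun v => (α.count v : ℤ)) u := by
  induction α with
  | nil =>
    intro x _ u
    show ((x u : ℕ) : ℤ) = (x u : ℤ) + (laplacian d).mulVec (fun v => ((0:ℕ) : ℤ)) u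
    have : (laplacian d).mulVec (fun _ : V => ((0:ℕ) : ℤ)) u = 0 := by
      rw [lap_mulVec]
      simp
    rw [this, add_zero]
  | cons v rest ih =>
    intro x hleg u
    obtain ⟨hfire, hrest⟩ := hleg
    have h1 := ih (fire d x v) hrest u
    show (runGame d (fire d x v) rest u : ℤ) = _
    rw [h1, fire_cast d x v hfire u]
    have hcount : (fun w => (((v :: rest).count w : ℕ) : ℤ))
        = (fun w => ((rest.count w : ℕ) : ℤ)) + (fun w => if w = v then (1:ℤ) else 0) := by
      funext w
      simp only [Pi.add_apply, List.count_cons]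
      by_cases h : w = v
      · subst h; simp
      · simp [h, Ne.symm h]
    rw [hcount, Matrix.mulVec_add, Pi.add_apply, mulVec_single]
    ring

/-- Key counting lemma: a legal game cannot exceed a nonnegative threshold `m`
    if every vertex is either blocked at `x + Lm` or the total count stays `≤ m`. -/
private lemma count_le (d : V → V → ℕ) (α : List V) :
    ∀ (x : V → ℕ) (m : V → ℤ), LegalSeq d x α → (∀ v, 0 ≤ m v) →
      (∀ v, ((x v : ℤ) + (laplacian d).mulVec m v < (outdeg d v : ℤ))
        ∨ ((α.count v : ℤ) ≤ m v)) →
      ∀ v, ((α.count v : ℤ) ≤ m v) := by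
  induction α with
  | nil =>
    intro x m _ hm _ v
    simpa using hm v
  | cons v rest ih =>
    intro x m hleg hm hyp
    obtain ⟨hfire, hrest⟩ := hleg
    rcases eq_or_lt_of_le (hm v) with h0 | hpos
    · exfalso
      rcases hyp v with hblock | hle
      · have hLm : 0 ≤ (laplacian d).mulVec m v := by
          rw [lap_mulVec]
          apply Finset.sum_nonneg
          intro u _
          by_cases h : v = u
          · subst h
            rw [if_pos rfl, ← h0, mul_zero]
          · rw [if_neg h]
            exact mul_nonneg (by positivity) (hm u)
        have hx : (outdeg d v : ℤ) ≤ (x v : ℤ) := by exact_mod_cast hfire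
        linarith
      · have : (1:ℤ) ≤ ((v :: rest).count v : ℤ) := by
          have : (v :: rest).count v = rest.count v + 1 := List.count_cons_self
          have h2 : 1 ≤ (v :: rest).count v := by omega
          exact_mod_cast h2
        linarith
    · set m' : V → ℤ := fun u => m u - (if u = v then 1 else 0) with hm'
      have hm'eq : m' = m - (fun w => if w = v then (1:ℤ) else 0) := rfl
      have hm'v : m' v = m v - 1 := by simp [hm']
      have hm'ne : ∀ u, u ≠ v → m' u = m u := by
        intro u h; simp [hm', h]
      have hm'nn : ∀ u, 0 ≤ m' u := by
        intro u
        by_cases h : u = v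
        · subst h; rw [hm'v]; linarith
        · rw [hm'ne u h]; exact hm u
      have hstate : ∀ u, (fire d x v u : ℤ) + (laplacian d).mulVec m' u
          = (x u : ℤ) + (laplacian d).mulVec m u := by
        intro u
        rw [fire_cast d x v hfire u, hm'eq, Matrix.mulVec_sub, Pi.sub_apply, mulVec_single]
        ring
      have hyp' : ∀ u, ((fire d x v u : ℤ) + (laplacian d).mulVec m' u < (outdeg d u : ℤ))
          ∨ ((rest.count u : ℤ) ≤ m' u) := by
        intro u
        rcases hyp u with hb | hle
        · left; rw [hstate u]; exact hb
        · right
          by_cases h : u = v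
          · have hc : (v :: rest).count u = rest.count u + 1 := by
              simp [List.count_cons, h]
            have hv' : m' u = m u - 1 := by rw [h]; exact hm'v
            rw [hc] at hle
            rw [hv']
            push_cast at hle
            linarith
          · have hc : (v :: rest).count u = rest.count u := by
              simp [List.count_cons, Ne.symm h]
            rw [hc] at hle
            rw [hm'ne u h]
            exact hle
      have hres := ih (fire d x v) m' hrest hm'nn hyp'
      intro w
      have hw := hres w
      by_cases h : w = v
      · have hc : (v :: rest).count w = rest.count w + 1 := by
          simp [List.count_cons, h]
        have hv' : m' w = m w - 1 := by rw [h]; exact hm'v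
        rw [hv'] at hw
        rw [hc]
        push_cast
        linarith
      · have hc : (v :: rest).count w = rest.count w := by
          simp [List.count_cons, Ne.symm h]
        rw [hm'ne w h] at hw
        rw [hc]
        exact hw

end Aux

/-- Soundness of the non-reachability certificate: if `f, g ∈ ℤ^V`
satisfy (1) `x + Lf = y`, `f ≥ 0` and `f` reduced; (2) `0 ≤ g ≤ f` with `g(v) < f(v)`
for some `v`; (3) for every `v`, `g(v) = f(v)` or `(x + Lg)(v) < d⁺(v)`; then `¬(x ⤳ y)`. -/
theorem not_reaches_of_certificate {V : Type*} [Fintype V] [DecidableEq V]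
    (d : V → V → ℕ) (hloop : Loopless d) (hconn : WeaklyConnected d)
    (x y : V → ℕ) (f g : V → ℤ)
    (h1 : (∀ v, (y v : ℤ) = (x v : ℤ) + (laplacian d).mulVec f v) ∧ (∀ v, 0 ≤ f v) ∧
      ∀ p : V → ℕ, PeriodVector d p → p ≠ 0 → ¬ (∀ v, (p v : ℤ) ≤ f v))
    (h2 : (∀ v, 0 ≤ g v ∧ g v ≤ f v) ∧ ∃ v, g v < f v)
    (h3 : ∀ v, g v = f v ∨ (x v : ℤ) + (laplacian d).mulVec g v < (outdeg d v : ℤ)) :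
    ¬ Reaches d x y := by
  obtain ⟨hxy, hf0, hred⟩ := h1
  obtain ⟨hg, v0, hv0⟩ := h2
  rintro ⟨α, hleg, hrun⟩
  set h : V → ℤ := fun v => ((α.count v : ℕ) : ℤ) with hh
  have hrunz : ∀ u, (y u : ℤ) = (x u : ℤ) + (laplacian d).mulVec h u := by
    intro u
    rw [← hrun]
    exact runGame_cast d α x hleg u
  have hLfh : ∀ u, (laplacian d).mulVec h u = (laplacian d).mulVec f u := by
    intro u
    have h1 := hxy u
    have h2 := hrunz u
    linarith
  have hzker : (laplacian d).mulVec (f - h) = 0 := by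
    funext u
    rw [Matrix.mulVec_sub, Pi.sub_apply, hLfh u]
    simp
  have hmax := maxpr d hloop (f - h) hzker
  set q : V → ℕ := fun v => (f v - h v).toNat with hq
  have hqcast : ∀ v, ((q v : ℕ) : ℤ) = max (f v - h v) 0 := fun v => Int.toNat_eq_max _
  have hper : PeriodVector d q := by
    unfold PeriodVector
    have : (fun v => ((q v : ℕ) : ℤ)) = (fun v => max ((f - h) v) 0) := by
      funext v
      rw [hqcast v]
      rfl
    rw [this]
    exact hmax
  have hfh : ∀ v, f v ≤ h v := by
    by_contra hc
    push_neg at hc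
    obtain ⟨w, hw⟩ := hc
    have hqne : q ≠ 0 := by
      intro h0
      have := congrFun h0 w
      simp only [hq, Pi.zero_apply] at this
      have : (f w - h w).toNat = 0 := this
      omega
    refine hred q hper hqne (fun v => ?_)
    rw [hqcast v]
    have h0 : (0:ℤ) ≤ h v := Nat.cast_nonneg _
    have := hf0 v
    rw [max_le_iff]
    constructor <;> linarith
  set m : V → ℤ := fun v => g v + (h v - f v) with hmdef
  have hmeq : m = g + (h - f) := rfl
  have hLp : (laplacian d).mulVec (h - f) = 0 := by
    funext u
    rw [Matrix.mulVec_sub, Pi.sub_apply, hLfh u]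
    simp
  have hLm : ∀ u, (laplacian d).mulVec m u = (laplacian d).mulVec g u := by
    intro u
    rw [hmeq, Matrix.mulVec_add, Pi.add_apply, hLp]
    simp
  have hmnn : ∀ v, 0 ≤ m v := by
    intro v
    have := (hg v).1
    have := hfh v
    simp only [hmdef]
    linarith
  have hcle : ∀ v, ((α.count v : ℕ) : ℤ) ≤ m v := by
    refine count_le d α x m hleg hmnn (fun v => ?_)
    rcases h3 v with he | hb
    · right
      show h v ≤ m v
      simp only [hmdef, he]
      linarith
    · left
      rw [hLm v]
      exact hb
  have hfin := hcle v0
  have : h v0 ≤ m v0 := hfin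
  simp only [hmdef] at this
  linarith

end ChipFiring
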